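/- In the metric voting setting, if for candidates j*, k, i* we have s_{j*≻k} ≥ θ and either k = i* or s_{k≻i*} ≥ θ for some θ ∈ (1/2, 1], then SC(j*) ≤ (4/θ − 3)·SC(i*). -/

import Mathlib

set_option maxHeartbeats 1000000

lemma two_step_arith (θ N sR tR mR A B Cc SCi D2 D3 : ℝ)
    (hθ₁ : 1/2 < θ) (hθ₂ : θ ≤ 1)
    (hA0 : 0 ≤ A) (hB0 : 0 ≤ B) (hC0 : 0 ≤ Cc)
    (hD2 : 0 ≤ D2) (hD3 : 0 ≤ D3)
    (hms : mR ≤ sR) (hmt : mR ≤ tR) (hun : sR + tR - mR ≤ N)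
    (hcS : θ * N ≤ sR) (hcT : θ * N ≤ tR)
    (hP2 : mR * D3 ≤ 2 * A)
    (hP3 : (sR - mR) * D3 ≤ 2 * B + (sR - mR) * D2)
    (hP4 : (tR - mR) * D2 ≤ 2 * Cc)
    (hABC : A + B + Cc ≤ SCi) :
    (N - mR) * D3 ≤ (4/θ - 4) * SCi := by
  have hθ0 : (0:ℝ) < θ := by linarith
  have h1θ : (0:ℝ) ≤ 1 - θ := by linarith
  have p1 : (0:ℝ) ≤ (2 - θ) * (sR - θ * N) :=
    mul_nonneg (by linarith) (by linarith)
  have p1' : (0:ℝ) ≤ (2 - θ) * (tR - θ * N) :=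
    mul_nonneg (by linarith) (by linarith)
  have p2 : (0:ℝ) ≤ θ * (tR - θ * N) := mul_nonneg hθ0.le (by linarith)
  have p2' : (0:ℝ) ≤ θ * (sR - θ * N) := mul_nonneg hθ0.le (by linarith)
  have p3 : (0:ℝ) ≤ θ * (N - (sR + tR - mR)) := mul_nonneg hθ0.le (by linarith)
  have Ls : θ * (N - mR) ≤ 2 * (1 - θ) * sR := by linarith [p1, p2, p3]
  have Lt : θ * (N - mR) ≤ 2 * (1 - θ) * tR := by linarith [p1', p2', p3]
  have key : θ * ((N - mR) * D3) ≤ 4 * (1 - θ) * (A + B + Cc) := by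
    have a2 : (2 * (1 - θ)) * (mR * D3) ≤ (2 * (1 - θ)) * (2 * A) :=
      mul_le_mul_of_nonneg_left hP2 (by linarith)
    have a3 : (0:ℝ) ≤ (1 - θ) * B := mul_nonneg h1θ hB0
    have a4 : (0:ℝ) ≤ (1 - θ) * Cc := mul_nonneg h1θ hC0
    rcases le_or_gt (θ * (N - mR)) (2 * (1 - θ) * mR) with hca | hcb
    · have a1 : (θ * (N - mR)) * D3 ≤ (2 * (1 - θ) * mR) * D3 :=
        mul_le_mul_of_nonneg_right hca hD3
      linarith [a1, a2, a3, a4]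
    · obtain ⟨R, hRdef⟩ : ∃ R, R = θ * (N - mR) - 2 * (1 - θ) * mR := ⟨_, rfl⟩
      have hR0 : 0 < R := by rw [hRdef]; linarith
      have hRs : R ≤ 2 * (1 - θ) * (sR - mR) := by
        rw [hRdef]; linarith [Ls]
      have hRt : R ≤ 2 * (1 - θ) * (tR - mR) := by
        rw [hRdef]; linarith [Lt]
      have hsm : 0 < sR - mR := by
        rcases lt_or_ge 0 (sR - mR) with h | h
        · exact h
        · have : 2 * (1 - θ) * (sR - mR) ≤ 0 :=
            mul_nonpos_of_nonneg_of_nonpos (by linarith) h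
          linarith
      have e1 : R * ((sR - mR) * D3) ≤ R * (2 * B + (sR - mR) * D2) :=
        mul_le_mul_of_nonneg_left hP3 hR0.le
      have e2 : R * ((sR - mR) * D2) ≤ (2 * (1 - θ) * (tR - mR)) * ((sR - mR) * D2) :=
        mul_le_mul_of_nonneg_right hRt (mul_nonneg hsm.le hD2)
      have e3 : (2 * (1 - θ) * (tR - mR)) * ((sR - mR) * D2)
          = (2 * (1 - θ) * (sR - mR)) * ((tR - mR) * D2) := by ring
      have e4 : (2 * (1 - θ) * (sR - mR)) * ((tR - mR) * D2)
          ≤ (2 * (1 - θ) * (sR - mR)) * (2 * Cc) :=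
        mul_le_mul_of_nonneg_left hP4 (by positivity)
      have e5 : R * (2 * B) ≤ (2 * (1 - θ) * (sR - mR)) * (2 * B) :=
        mul_le_mul_of_nonneg_right hRs (by linarith)
      have hfin : (sR - mR) * (R * D3) ≤ (sR - mR) * (4 * (1 - θ) * (B + Cc)) := by
        linarith [e1, e2, e3, e4, e5]
      have hRD3 : R * D3 ≤ 4 * (1 - θ) * (B + Cc) := le_of_mul_le_mul_left hfin hsm
      rw [hRdef] at hRD3
      linarith [hRD3, a2]
  have k2 : θ * ((N - mR) * D3) ≤ 4 * (1 - θ) * SCi := by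
    have : (0:ℝ) ≤ 4 * (1 - θ) * (SCi - (A + B + Cc)) :=
      mul_nonneg (by linarith) (by linarith)
    linarith [key, this]
  have hθne : θ ≠ 0 := ne_of_gt hθ0
  have heq : (4/θ - 4) * SCi = (4 * (1 - θ) * SCi) / θ := by
    rw [eq_div_iff hθne]; field_simp
  rw [heq, le_div_iff₀ hθ0]
  linarith [k2]


lemma two_step_aux {V : Type*} [Fintype V] [DecidableEq V] (θ : ℝ) (hθ₁ : 1/2 < θ) (hθ₂ : θ ≤ 1)
    (dj di : V → ℝ) (hdi : ∀ v, 0 ≤ di v)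
    (D2 D3 : ℝ) (hD2 : 0 ≤ D2) (hD3 : 0 ≤ D3)
    (S T : Finset V)
    (hcS : θ * (Fintype.card V : ℝ) ≤ S.card)
    (hcT : θ * (Fintype.card V : ℝ) ≤ T.card)
    (hji : ∀ v ∈ S ∩ T, dj v ≤ di v)
    (htri : ∀ v, dj v ≤ di v + D3)
    (hM : ∀ v ∈ S ∩ T, D3 ≤ 2 * di v)
    (hS4 : ∀ v ∈ S \ T, D3 ≤ 2 * di v + D2)
    (hT5 : ∀ v ∈ T \ S, D2 ≤ 2 * di v) :
    ∑ v, dj v ≤ (4/θ - 3) * ∑ v, di v := by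
  classical
  have hθ0 : (0:ℝ) < θ := by linarith
  have h1θ : (0:ℝ) ≤ 1 - θ := by linarith
  set N : ℝ := (Fintype.card V : ℝ) with hN
  set M : Finset V := S ∩ T with hMdef
  set A := ∑ v ∈ M, di v with hA
  set B := ∑ v ∈ S \ T, di v with hB
  set Cc := ∑ v ∈ T \ S, di v with hC
  set SCi := ∑ v, di v with hSCi
  set SCj := ∑ v, dj v with hSCj
  set mR := (M.card : ℝ) with hmR
  set sR := (S.card : ℝ) with hsR
  set tR := (T.card : ℝ) with htR
  have hA0 : 0 ≤ A := Finset.sum_nonneg fun v _ => hdi v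
  have hB0 : 0 ≤ B := Finset.sum_nonneg fun v _ => hdi v
  have hC0 : 0 ≤ Cc := Finset.sum_nonneg fun v _ => hdi v
  have hSCi0 : 0 ≤ SCi := Finset.sum_nonneg fun v _ => hdi v
  -- cardinality relations
  have hms : mR ≤ sR := by
    have h : (S ∩ T).card ≤ S.card := Finset.card_le_card Finset.inter_subset_left
    rw [hmR, hsR, hMdef]; exact_mod_cast h
  have hmt : mR ≤ tR := by
    have h : (S ∩ T).card ≤ T.card := Finset.card_le_card Finset.inter_subset_right
    rw [hmR, htR, hMdef]; exact_mod_cast h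
  have hcardS : ((S \ T).card : ℝ) = sR - mR := by
    have h := Finset.card_inter_add_card_sdiff S T
    have h' : ((S ∩ T).card : ℝ) + ((S \ T).card : ℝ) = (S.card : ℝ) := by exact_mod_cast h
    rw [hmR, hsR, hMdef]; linarith
  have hcardT : ((T \ S).card : ℝ) = tR - mR := by
    have h := Finset.card_inter_add_card_sdiff T S
    have h' : ((T ∩ S).card : ℝ) + ((T \ S).card : ℝ) = (T.card : ℝ) := by exact_mod_cast h
    rw [Finset.inter_comm] at h'
    rw [hmR, htR, hMdef]; linarith
  have hun : sR + tR - mR ≤ N := by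
    have h := Finset.card_union_add_card_inter S T
    have h' : ((S ∪ T).card : ℝ) + ((S ∩ T).card : ℝ) = (S.card : ℝ) + (T.card : ℝ) := by
      exact_mod_cast h
    have hu : (S ∪ T).card ≤ Fintype.card V := Finset.card_le_univ _
    have h2 : ((S ∪ T).card : ℝ) ≤ N := by rw [hN]; exact_mod_cast hu
    rw [hsR, htR, hmR, hMdef]
    linarith
  have hmN : mR ≤ N := by
    have h : M.card ≤ Fintype.card V := Finset.card_le_univ M
    rw [hmR, hN]; exact_mod_cast h
  -- P1
  have hP1 : SCj ≤ SCi + (N - mR) * D3 := by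
    have e1 : ∑ v ∈ M, dj v + ∑ v ∈ Mᶜ, dj v = SCj := Finset.sum_add_sum_compl M dj
    have e2 : ∑ v ∈ M, di v + ∑ v ∈ Mᶜ, di v = SCi := Finset.sum_add_sum_compl M di
    have b1 : ∑ v ∈ M, dj v ≤ ∑ v ∈ M, di v := Finset.sum_le_sum hji
    have b2 : ∑ v ∈ Mᶜ, dj v ≤ ∑ v ∈ Mᶜ, (di v + D3) :=
      Finset.sum_le_sum fun v _ => htri v
    have b3 : ∑ v ∈ Mᶜ, (di v + D3) = ∑ v ∈ Mᶜ, di v + (Mᶜ.card : ℝ) * D3 := by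
      rw [Finset.sum_add_distrib, Finset.sum_const, nsmul_eq_mul]
    have b4 : ((Mᶜ).card : ℝ) = N - mR := by
      rw [Finset.card_compl]
      have : M.card ≤ Fintype.card V := Finset.card_le_univ M
      push_cast [Nat.cast_sub this]
      ring
    rw [b4] at b3
    linarith
  -- P2
  have hP2 : mR * D3 ≤ 2 * A := by
    have h := Finset.sum_le_sum hM
    rw [Finset.sum_const, nsmul_eq_mul, ← Finset.mul_sum] at h
    exact h
  -- P3
  have hP3 : (sR - mR) * D3 ≤ 2 * B + (sR - mR) * D2 := by
    have h := Finset.sum_le_sum hS4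
    rw [Finset.sum_const, nsmul_eq_mul, Finset.sum_add_distrib, Finset.sum_const,
      nsmul_eq_mul, ← Finset.mul_sum] at h
    rw [hcardS] at h
    exact h
  -- P4
  have hP4 : (tR - mR) * D2 ≤ 2 * Cc := by
    have h := Finset.sum_le_sum hT5
    rw [Finset.sum_const, nsmul_eq_mul, ← Finset.mul_sum, hcardT] at h
    exact h
  -- A + B + C ≤ SCi
  have hABC : A + B + Cc ≤ SCi := by
    have e1 : A + B = ∑ v ∈ S, di v := by
      rw [hA, hB, hMdef]; exact Finset.sum_inter_add_sum_sdiff S T di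
    have e2 : ∑ v ∈ S, di v + Cc = ∑ v ∈ S ∪ T, di v := by
      rw [hC, ← Finset.sum_union Finset.disjoint_sdiff, Finset.union_sdiff_self_eq_union]
    have e3 : ∑ v ∈ S ∪ T, di v ≤ SCi :=
      Finset.sum_le_sum_of_subset_of_nonneg (Finset.subset_univ _) (fun v _ _ => hdi v)
    linarith
  have harith := two_step_arith θ N sR tR mR A B Cc SCi D2 D3 hθ₁ hθ₂ hA0 hB0 hC0
    hD2 hD3 hms hmt hun hcS hcT hP2 hP3 hP4 hABC
  have hfin : (4/θ - 3) * SCi = SCi + (4/θ - 4) * SCi := by ring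
  linarith [hP1, harith]

/-- Metric voting (Corollary "two-step"): voters and candidates lie in a
pseudometric space, each voter has a strict total order on candidates consistent
with distances. If `s_{j*≻k} ≥ θ` and (`k = i*` or `s_{k≻i*} ≥ θ`) for
`θ ∈ (1/2, 1]`, then `SC(j*) ≤ (4/θ − 3)·SC(i*)`. -/
theorem stmt3 {X V C : Type*} [PseudoMetricSpace X] [Fintype V] [Nonempty V] [Fintype C]
    (vloc : V → X) (cloc : C → X)
    (pref : V → C → C → Prop) [∀ v, DecidableRel (pref v)]
    (htrans : ∀ v, Transitive (pref v))
    (hirr : ∀ v a b, pref v a b → ¬ pref v b a)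
    (htotal : ∀ v (a b : C), a ≠ b → pref v a b ∨ pref v b a)
    (hconsist : ∀ v a b, dist (vloc v) (cloc a) < dist (vloc v) (cloc b) → pref v a b)
    (s : C → C → ℝ)
    (hs : ∀ a b, s a b =
      ((Finset.univ.filter fun v => pref v a b).card : ℝ) / (Fintype.card V))
    (θ : ℝ) (hθ₁ : 1/2 < θ) (hθ₂ : θ ≤ 1)
    (jstar k istar : C)
    (h1 : s jstar k ≥ θ) (h2 : k = istar ∨ s k istar ≥ θ) :
    ∑ v : V, dist (vloc v) (cloc jstar) ≤
      (4/θ - 3) * ∑ v : V, dist (vloc v) (cloc istar) := by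
  classical
  have hpd : ∀ v a b, pref v a b → dist (vloc v) (cloc a) ≤ dist (vloc v) (cloc b) := by
    intro v a b h
    by_contra hlt
    push_neg at hlt
    exact hirr v b a (hconsist v b a hlt) h
  have hN0 : (0:ℝ) < (Fintype.card V : ℝ) := by exact_mod_cast Fintype.card_pos
  have hcS : θ * (Fintype.card V : ℝ) ≤
      ((Finset.univ.filter fun v => pref v jstar k).card : ℝ) := by
    rw [hs jstar k, ge_iff_le, le_div_iff₀ hN0] at h1
    exact h1
  set S : Finset V := Finset.univ.filter (fun v => pref v jstar k) with hSdef
  have hSmem : ∀ v ∈ S, pref v jstar k := by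
    intro v hv; exact (Finset.mem_filter.mp hv).2
  rcases h2 with rfl | h2
  · -- k = istar
    refine two_step_aux θ hθ₁ hθ₂ (fun v => dist (vloc v) (cloc jstar))
      (fun v => dist (vloc v) (cloc k)) (fun v => dist_nonneg)
      0 (dist (cloc jstar) (cloc k)) le_rfl dist_nonneg S S hcS hcS ?_ ?_ ?_ ?_ ?_
    · intro v hv
      exact hpd v jstar k (hSmem v (Finset.mem_inter.mp hv).1)
    · intro v
      calc dist (vloc v) (cloc jstar)
          ≤ dist (vloc v) (cloc k) + dist (cloc k) (cloc jstar) := dist_triangle _ _ _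
        _ = dist (vloc v) (cloc k) + dist (cloc jstar) (cloc k) := by rw [dist_comm (cloc k) (cloc jstar)]
    · intro v hv
      have h1 : dist (cloc jstar) (cloc k) ≤
          dist (cloc jstar) (vloc v) + dist (vloc v) (cloc k) := dist_triangle _ _ _
      have h2 : dist (cloc jstar) (vloc v) = dist (vloc v) (cloc jstar) := dist_comm _ _
      have h3 := hpd v jstar k (hSmem v (Finset.mem_inter.mp hv).1)
      linarith
    · intro v hv
      rw [Finset.sdiff_self] at hv
      exact absurd hv (Finset.notMem_empty v)
    · intro v hv
      rw [Finset.sdiff_self] at hv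
      exact absurd hv (Finset.notMem_empty v)
  · -- general case
    have hcT : θ * (Fintype.card V : ℝ) ≤
        ((Finset.univ.filter fun v => pref v k istar).card : ℝ) := by
      rw [hs k istar, ge_iff_le, le_div_iff₀ hN0] at h2
      exact h2
    set T : Finset V := Finset.univ.filter (fun v => pref v k istar) with hTdef
    have hTmem : ∀ v ∈ T, pref v k istar := by
      intro v hv; exact (Finset.mem_filter.mp hv).2
    refine two_step_aux θ hθ₁ hθ₂ (fun v => dist (vloc v) (cloc jstar))
      (fun v => dist (vloc v) (cloc istar)) (fun v => dist_nonneg)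
      (dist (cloc k) (cloc istar)) (dist (cloc jstar) (cloc istar))
      dist_nonneg dist_nonneg S T hcS hcT ?_ ?_ ?_ ?_ ?_
    · intro v hv
      have h3 := hpd v jstar k (hSmem v (Finset.mem_inter.mp hv).1)
      have h4 := hpd v k istar (hTmem v (Finset.mem_inter.mp hv).2)
      linarith
    · intro v
      calc dist (vloc v) (cloc jstar)
          ≤ dist (vloc v) (cloc istar) + dist (cloc istar) (cloc jstar) :=
            dist_triangle _ _ _
        _ = dist (vloc v) (cloc istar) + dist (cloc jstar) (cloc istar) := by
            rw [dist_comm (cloc istar)]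
    · intro v hv
      have h3 := hpd v jstar k (hSmem v (Finset.mem_inter.mp hv).1)
      have h4 := hpd v k istar (hTmem v (Finset.mem_inter.mp hv).2)
      have h5 : dist (cloc jstar) (cloc istar) ≤
          dist (cloc jstar) (vloc v) + dist (vloc v) (cloc istar) := dist_triangle _ _ _
      have h6 : dist (cloc jstar) (vloc v) = dist (vloc v) (cloc jstar) := dist_comm _ _
      linarith
    · intro v hv
      have h3 := hpd v jstar k (hSmem v (Finset.mem_sdiff.mp hv).1)
      have h5 : dist (cloc jstar) (cloc istar) ≤
          dist (cloc jstar) (vloc v) + dist (vloc v) (cloc istar) := dist_triangle _ _ _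
      have h6 : dist (cloc jstar) (vloc v) = dist (vloc v) (cloc jstar) := dist_comm _ _
      have h7 : dist (vloc v) (cloc k) ≤
          dist (vloc v) (cloc istar) + dist (cloc istar) (cloc k) := dist_triangle _ _ _
      have h8 : dist (cloc istar) (cloc k) = dist (cloc k) (cloc istar) := dist_comm _ _
      linarith
    · intro v hv
      have h4 := hpd v k istar (hTmem v (Finset.mem_sdiff.mp hv).1)
      have h5 : dist (cloc k) (cloc istar) ≤
          dist (cloc k) (vloc v) + dist (vloc v) (cloc istar) := dist_triangle _ _ _
      have h6 : dist (cloc k) (vloc v) = dist (vloc v) (cloc k) := dist_comm _ _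
      linarith
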